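/- Target coverage bound for hard pseudo-calibration (population version): suppose Q(S̃ ≤ q) ≥ 1 - α where S̃ = s(X, f̂(X)), the margin γ_f is L_γ-Lipschitz in x, P_Y = Q_Y, and W₁(P_{X|y}, Q_{X|y}) ≤ ρ for all y. Then Q(s(X,Y) ≤ q) ≥ 1 - α - L_r(f,P) - L_γ·ρ, where L_r(f,P) is the source ramp loss. -/

import Mathlib

open MeasureTheory
open scoped ENNReal

/-- The set of couplings of two measures. -/
def couplings {X : Type*} [MeasurableSpace X] (P Q : Measure X) :
    Set (Measure (X × X)) :=
  {π | IsProbabilityMeasure π ∧ π.map Prod.fst = P ∧ π.map Prod.snd = Q}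

/-- The 1-Wasserstein distance: infimum over couplings of the expected distance. -/
noncomputable def W1 {X : Type*} [MeasurableSpace X] [PseudoEMetricSpace X]
    (P Q : Measure X) : ℝ≥0∞ :=
  ⨅ π ∈ couplings P Q, ∫⁻ p, edist p.1 p.2 ∂π

/-- The ramp function `r(t) = min(max(1-t,0),1)`. -/
noncomputable def ramp (t : ℝ) : ℝ := min (max (1 - t) 0) 1

/-- Multiclass margin: `γ_f(x,y) = f(x)_y - max_{k ≠ y} f(x)_k`. -/
noncomputable def margin {X : Type*} {K : ℕ} (hK : 2 ≤ K)
    (f : X → Fin K → ℝ) (x : X) (y : Fin K) : ℝ :=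
  f x y - (Finset.univ.erase y).sup' (by
    rw [← Finset.card_pos, Finset.card_erase_of_mem (Finset.mem_univ y),
      Finset.card_univ, Fintype.card_fin]
    omega) (f x)

/-- Nonconformity score `s(x,y) = -γ_f(x,y)`. -/
noncomputable def score {X : Type*} {K : ℕ} (hK : 2 ≤ K)
    (f : X → Fin K → ℝ) (x : X) (y : Fin K) : ℝ :=
  -(margin hK f x y)


lemma ramp_nonneg' (t : ℝ) : 0 ≤ ramp t := le_min (le_max_right _ _) zero_le_one
lemma ramp_le_one' (t : ℝ) : ramp t ≤ 1 := min_le_right _ _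
lemma ramp_eq_one' {t : ℝ} (h : t ≤ 0) : ramp t = 1 := by
  unfold ramp
  rw [max_eq_left (by linarith), min_eq_right (by linarith)]
lemma ramp_lip' (a b : ℝ) : |ramp a - ramp b| ≤ |a - b| := by
  unfold ramp
  calc |min (max (1-a) 0) 1 - min (max (1-b) 0) 1|
      ≤ max |max (1-a) 0 - max (1-b) 0| |(1:ℝ) - 1| := abs_min_sub_min_le_max _ _ _ _
    _ ≤ |max (1-a) 0 - max (1-b) 0| := by simp
    _ ≤ |(1-a) - (1-b)| := abs_max_sub_max_le_abs _ _ _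
    _ = |a - b| := by rw [show (1-a) - (1-b) = -(a-b) by ring, abs_neg]
lemma ramp_cont' : Continuous ramp := by unfold ramp; fun_prop

/-- Per-class Wasserstein transport bound. -/
lemma key_W1 {d : ℕ} (μ ν : Measure (EuclideanSpace ℝ (Fin d)))
    [IsProbabilityMeasure μ] [IsProbabilityMeasure ν]
    (g : EuclideanSpace ℝ (Fin d) → ℝ) (hg : Measurable g)
    (hg0 : ∀ x, 0 ≤ g x) (hg1 : ∀ x, g x ≤ 1)
    (L : ℝ) (hL : 0 ≤ L) (hlip : ∀ x x', |g x - g x'| ≤ L * dist x x')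
    (ρ : ℝ) (hρ : 0 ≤ ρ) (hW : (⨅ π ∈ ({π | IsProbabilityMeasure π ∧ π.map Prod.fst = μ ∧ π.map Prod.snd = ν} : Set _), ∫⁻ p, edist p.1 p.2 ∂π) ≤ ENNReal.ofReal ρ) :
    ∫ x, g x ∂ν ≤ ∫ x, g x ∂μ + L * ρ := by
  refine le_of_forall_pos_le_add fun ε hε => ?_
  set δ : ℝ := ε / (L + 1) with hδdef
  have hδ : 0 < δ := div_pos hε (by linarith)
  have hlt : (⨅ π ∈ ({π | IsProbabilityMeasure π ∧ π.map Prod.fst = μ ∧ π.map Prod.snd = ν} : Set _), ∫⁻ p, edist p.1 p.2 ∂π) < ENNReal.ofReal (ρ + δ) := by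
    refine lt_of_le_of_lt hW ?_
    rw [ENNReal.ofReal_add hρ hδ.le]
    exact ENNReal.lt_add_right ENNReal.ofReal_ne_top (by simpa using hδ)
  obtain ⟨π, ⟨hπp, hπ1, hπ2⟩, hπc⟩ :
      ∃ π ∈ ({π | IsProbabilityMeasure π ∧ π.map Prod.fst = μ ∧ π.map Prod.snd = ν} : Set _),
        ∫⁻ p, edist p.1 p.2 ∂π < ENNReal.ofReal (ρ + δ) := by
    simpa [iInf_lt_iff] using hlt
  haveI := hπp
  have hdm : Measurable fun p : EuclideanSpace ℝ (Fin d) × EuclideanSpace ℝ (Fin d) =>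
      dist p.1 p.2 := measurable_fst.dist measurable_snd
  have hdint : Integrable (fun p : EuclideanSpace ℝ (Fin d) × EuclideanSpace ℝ (Fin d) =>
      dist p.1 p.2) π := by
    refine ⟨hdm.aestronglyMeasurable, ?_⟩
    show (∫⁻ p, (‖dist p.1 p.2‖₊ : ℝ≥0∞) ∂π) < ⊤
    have : ∀ p : EuclideanSpace ℝ (Fin d) × EuclideanSpace ℝ (Fin d),
        (‖dist p.1 p.2‖₊ : ℝ≥0∞) = edist p.1 p.2 := fun p => by
      rw [← enorm_eq_nnnorm, Real.enorm_eq_ofReal dist_nonneg, edist_dist]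
    simp_rw [this]
    exact hπc.trans_le le_top
  have hint1 : Integrable (fun p : EuclideanSpace ℝ (Fin d) × EuclideanSpace ℝ (Fin d) =>
      g p.1) π := by
    refine Integrable.mono' (integrable_const 1) (hg.comp measurable_fst).aestronglyMeasurable
      (ae_of_all _ fun p => ?_)
    rw [Real.norm_eq_abs, abs_of_nonneg (hg0 _)]; exact hg1 _
  have hint2 : Integrable (fun p : EuclideanSpace ℝ (Fin d) × EuclideanSpace ℝ (Fin d) =>
      g p.2) π := by
    refine Integrable.mono' (integrable_const 1) (hg.comp measurable_snd).aestronglyMeasurable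
      (ae_of_all _ fun p => ?_)
    rw [Real.norm_eq_abs, abs_of_nonneg (hg0 _)]; exact hg1 _
  have hμ : ∫ x, g x ∂μ = ∫ p, g p.1 ∂π := by
    rw [← hπ1, integral_map measurable_fst.aemeasurable]
    rw [hπ1]; exact hg.aestronglyMeasurable
  have hν : ∫ x, g x ∂ν = ∫ p, g p.2 ∂π := by
    rw [← hπ2, integral_map measurable_snd.aemeasurable]
    rw [hπ2]; exact hg.aestronglyMeasurable
  have hsub : ∫ x, g x ∂ν - ∫ x, g x ∂μ ≤ L * (ρ + δ) := by
    rw [hμ, hν, ← integral_sub hint2 hint1]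
    have h2 : ∫ p, (g p.2 - g p.1) ∂π ≤ ∫ p, L * dist p.1 p.2 ∂π := by
      refine integral_mono (hint2.sub hint1) (hdint.const_mul L) fun p => ?_
      calc g p.2 - g p.1 ≤ |g p.2 - g p.1| := le_abs_self _
        _ ≤ L * dist p.2 p.1 := hlip _ _
        _ = L * dist p.1 p.2 := by rw [dist_comm]
    refine h2.trans ?_
    rw [integral_const_mul]
    refine mul_le_mul_of_nonneg_left ?_ hL
    have hnn : 0 ≤ᶠ[ae π] fun p : EuclideanSpace ℝ (Fin d) × EuclideanSpace ℝ (Fin d) =>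
        dist p.1 p.2 := ae_of_all _ fun p => dist_nonneg
    have := ofReal_integral_eq_lintegral_ofReal hdint hnn
    simp_rw [← edist_dist] at this
    have hle : ENNReal.ofReal (∫ p, dist p.1 p.2 ∂π) ≤ ENNReal.ofReal (ρ + δ) := by
      rw [this]; exact hπc.le
    have := ENNReal.toReal_mono ENNReal.ofReal_ne_top hle
    rwa [ENNReal.toReal_ofReal (integral_nonneg fun p => dist_nonneg),
      ENNReal.toReal_ofReal (by linarith)] at this
  have hLδ : L * δ ≤ ε := by
    rw [hδdef, mul_comm, div_mul_eq_mul_div, div_le_iff₀ (by linarith : (0:ℝ) < L + 1)]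
    nlinarith
  nlinarith [hsub]

/-- Integral over a mixture measure. -/
lemma mix_integral' {d K : ℕ} (μc : Fin K → Measure (EuclideanSpace ℝ (Fin d)))
    [hpm : ∀ y, IsProbabilityMeasure (μc y)] (w : Fin K → ℝ≥0∞) (hw : ∀ y, w y ≠ ⊤)
    (G : EuclideanSpace ℝ (Fin d) × Fin K → ℝ) (hGm : Measurable G)
    (hb : ∀ p, ‖G p‖ ≤ 1) :
    ∫ p, G p ∂(∑ y, w y • ((μc y).map fun x => (x, y))) =
      ∑ y, (w y).toReal * ∫ x, G (x, y) ∂(μc y) := by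
  haveI hmap : ∀ y : Fin K, IsProbabilityMeasure ((μc y).map fun x => (x, y)) :=
    fun y => Measure.isProbabilityMeasure_map measurable_prodMk_right.aemeasurable
  haveI : ∀ y : Fin K, IsFiniteMeasure (w y • ((μc y).map fun x => (x, y))) := fun y => by
    constructor
    rw [Measure.smul_apply, smul_eq_mul, measure_univ, mul_one]
    exact (hw y).lt_top
  have hint : ∀ y ∈ Finset.univ, Integrable G (w y • ((μc y).map fun x => (x, y))) := fun y _ =>
    Integrable.mono' (integrable_const 1) hGm.aestronglyMeasurable (ae_of_all _ hb)
  rw [integral_finset_sum_measure hint]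
  refine Finset.sum_congr rfl fun y _ => ?_
  rw [integral_smul_measure, integral_map measurable_prodMk_right.aemeasurable
    hGm.aestronglyMeasurable, smul_eq_mul]

/-- Target coverage bound for hard pseudo-calibration (population version):
if `Q(S̃ ≤ q) ≥ 1-α`, the margin is `L_γ`-Lipschitz in `x`, `P_Y = Q_Y`, and
`W₁(P_{X|y}, Q_{X|y}) ≤ ρ` for all `y`, then
`Q(s(X,Y) ≤ q) ≥ 1-α - L_r(f,P) - L_γ·ρ`. -/
theorem hard_pseudo_calibration_coverage {d K : ℕ} (hK : 2 ≤ K)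
    (f : EuclideanSpace ℝ (Fin d) → Fin K → ℝ)
    (hfm : ∀ k, Measurable fun x => f x k)
    (fhat : EuclideanSpace ℝ (Fin d) → Fin K) (hfhatm : Measurable fhat)
    (hfhat : ∀ x k, f x k ≤ f x (fhat x))
    (Lγ : ℝ) (hL : 0 ≤ Lγ)
    (hlip : ∀ x x' y, |margin hK f x y - margin hK f x' y| ≤ Lγ * dist x x')
    (Pc Qc : Fin K → Measure (EuclideanSpace ℝ (Fin d)))
    [∀ y, IsProbabilityMeasure (Pc y)] [∀ y, IsProbabilityMeasure (Qc y)]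
    (w : Fin K → ℝ≥0∞) (hw : ∑ y, w y = 1)
    (P Q : Measure (EuclideanSpace ℝ (Fin d) × Fin K))
    (hP : P = ∑ y, w y • ((Pc y).map fun x => (x, y)))
    (hQ : Q = ∑ y, w y • ((Qc y).map fun x => (x, y)))
    (ρ : ℝ) (hρ : 0 ≤ ρ)
    (hshift : ∀ y, W1 (Pc y) (Qc y) ≤ ENNReal.ofReal ρ)
    (α : ℝ) (hα : α ∈ Set.Icc (0:ℝ) 1) (q : ℝ)
    (hcov : ENNReal.ofReal (1 - α) ≤ Q {p | score hK f p.1 (fhat p.1) ≤ q}) :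
    1 - α - (∫ p, ramp (margin hK f p.1 p.2) ∂P) - Lγ * ρ ≤
      (Q {p | score hK f p.1 p.2 ≤ q}).toReal := by
  have hwy : ∀ y, w y ≠ ⊤ := by
    intro y h
    have h2 : (⊤:ℝ≥0∞) ≤ ∑ y, w y :=
      h ▸ Finset.single_le_sum (fun _ _ => zero_le) (Finset.mem_univ y)
    rw [hw] at h2
    simp at h2
  have hmarg : ∀ y, Measurable fun x => margin hK f x y := by
    intro y
    have hne : (Finset.univ.erase y).Nonempty := by
      rw [← Finset.card_pos, Finset.card_erase_of_mem (Finset.mem_univ y),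
        Finset.card_univ, Fintype.card_fin]
      omega
    unfold margin
    refine (hfm y).sub ?_
    have he : (fun x => (Finset.univ.erase y).sup' (by
        rw [← Finset.card_pos, Finset.card_erase_of_mem (Finset.mem_univ y),
          Finset.card_univ, Fintype.card_fin]
        omega) (f x)) = (Finset.univ.erase y).sup' (by
        rw [← Finset.card_pos, Finset.card_erase_of_mem (Finset.mem_univ y),
          Finset.card_univ, Fintype.card_fin]
        omega) (fun k x => f x k) := by
      funext x
      exact (Finset.sup'_apply (C := fun _ : EuclideanSpace ℝ (Fin d) => ℝ) hne (fun k x' => f x' k) x).symm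
    rw [he]
    exact Finset.measurable_sup' hne fun k _ => hfm k
  have hmargj : Measurable fun p : EuclideanSpace ℝ (Fin d) × Fin K => margin hK f p.1 p.2 :=
    measurable_from_prod_countable_left fun y => hmarg y
  have hGm : Measurable fun p : EuclideanSpace ℝ (Fin d) × Fin K =>
      ramp (margin hK f p.1 p.2) := ramp_cont'.measurable.comp hmargj
  have hGb : ∀ p : EuclideanSpace ℝ (Fin d) × Fin K, ‖ramp (margin hK f p.1 p.2)‖ ≤ 1 :=
    fun p => by
      rw [Real.norm_eq_abs, abs_of_nonneg (ramp_nonneg' _)]; exact ramp_le_one' _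
  haveI : ∀ y : Fin K, IsProbabilityMeasure ((Qc y).map fun x => (x, y)) :=
    fun y => Measure.isProbabilityMeasure_map measurable_prodMk_right.aemeasurable
  haveI hQp : IsProbabilityMeasure Q := by
    constructor
    rw [hQ, Measure.finset_sum_apply]
    simp only [Measure.smul_apply, smul_eq_mul, measure_univ, mul_one]
    exact hw
  -- Step A: event inclusion
  have hsubset : {p : EuclideanSpace ℝ (Fin d) × Fin K | score hK f p.1 (fhat p.1) ≤ q} ⊆
      {p | score hK f p.1 p.2 ≤ q} ∪ {p | margin hK f p.1 p.2 ≤ 0} := by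
    rintro ⟨x, y⟩ hp
    by_cases h : margin hK f x y ≤ 0
    · exact Or.inr h
    · left
      have hfy : fhat x = y := by
        by_contra hne
        have h1 : f x (fhat x) ≤ (Finset.univ.erase y).sup' (by
            rw [← Finset.card_pos, Finset.card_erase_of_mem (Finset.mem_univ y),
              Finset.card_univ, Fintype.card_fin]
            omega) (f x) :=
          Finset.le_sup' (f x) (Finset.mem_erase.mpr ⟨hne, Finset.mem_univ _⟩)
        have h2 : f x y ≤ f x (fhat x) := hfhat x y
        unfold margin at h
        push_neg at h
        linarith
      show score hK f x y ≤ q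
      rw [← hfy]
      exact hp
  -- Step B: margin event bounded by ramp loss
  have hGintQ : Integrable (fun p : EuclideanSpace ℝ (Fin d) × Fin K =>
      ramp (margin hK f p.1 p.2)) Q :=
    Integrable.mono' (integrable_const 1) hGm.aestronglyMeasurable (ae_of_all _ hGb)
  have hB : Q {p | margin hK f p.1 p.2 ≤ 0} ≤
      ENNReal.ofReal (∫ p, ramp (margin hK f p.1 p.2) ∂Q) := by
    have hms : MeasurableSet {p : EuclideanSpace ℝ (Fin d) × Fin K | margin hK f p.1 p.2 ≤ 0} :=
      hmargj measurableSet_Iic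
    rw [ofReal_integral_eq_lintegral_ofReal hGintQ (ae_of_all _ fun p => ramp_nonneg' _),
      ← lintegral_indicator_one hms]
    refine lintegral_mono fun p => ?_
    rw [Set.indicator_apply]
    split_ifs with hp
    · rw [ramp_eq_one' hp]
      simp
    · exact zero_le
  -- Step C: change of measure via Wasserstein
  have hper : ∀ y : Fin K, ∫ x, ramp (margin hK f x y) ∂(Qc y) ≤
      ∫ x, ramp (margin hK f x y) ∂(Pc y) + Lγ * ρ := by
    intro y
    refine key_W1 (Pc y) (Qc y) _ (ramp_cont'.measurable.comp (hmarg y))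
      (fun x => ramp_nonneg' _) (fun x => ramp_le_one' _) Lγ hL
      (fun x x' => (ramp_lip' _ _).trans (hlip x x' y)) ρ hρ ?_
    have := hshift y
    rw [W1, couplings] at this
    exact this
  have hPeq : ∫ p, ramp (margin hK f p.1 p.2) ∂P =
      ∑ y, (w y).toReal * ∫ x, ramp (margin hK f x y) ∂(Pc y) := by
    rw [hP, mix_integral' Pc w hwy _ hGm hGb]
  have hQeq : ∫ p, ramp (margin hK f p.1 p.2) ∂Q =
      ∑ y, (w y).toReal * ∫ x, ramp (margin hK f x y) ∂(Qc y) := by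
    rw [hQ, mix_integral' Qc w hwy _ hGm hGb]
  have hsum1 : ∑ y, (w y).toReal = 1 := by
    rw [← ENNReal.toReal_sum (fun y _ => hwy y), hw, ENNReal.toReal_one]
  have hC : ∫ p, ramp (margin hK f p.1 p.2) ∂Q ≤
      ∫ p, ramp (margin hK f p.1 p.2) ∂P + Lγ * ρ := by
    rw [hPeq, hQeq]
    calc ∑ y, (w y).toReal * ∫ x, ramp (margin hK f x y) ∂(Qc y)
        ≤ ∑ y, (w y).toReal * (∫ x, ramp (margin hK f x y) ∂(Pc y) + Lγ * ρ) :=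
          Finset.sum_le_sum fun y _ =>
            mul_le_mul_of_nonneg_left (hper y) ENNReal.toReal_nonneg
      _ = ∑ y, (w y).toReal * ∫ x, ramp (margin hK f x y) ∂(Pc y) +
            (∑ y, (w y).toReal) * (Lγ * ρ) := by
          simp only [mul_add, Finset.sum_add_distrib, Finset.sum_mul]
      _ = ∑ y, (w y).toReal * ∫ x, ramp (margin hK f x y) ∂(Pc y) + Lγ * ρ := by
          rw [hsum1, one_mul]
  -- Assemble
  have hchain : ENNReal.ofReal (1 - α) ≤ Q {p | score hK f p.1 p.2 ≤ q} +
      ENNReal.ofReal (∫ p, ramp (margin hK f p.1 p.2) ∂P + Lγ * ρ) := by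
    refine hcov.trans ((measure_mono hsubset).trans ?_)
    refine (measure_union_le _ _).trans (add_le_add le_rfl ?_)
    exact hB.trans (ENNReal.ofReal_le_ofReal hC)
  have hnn : 0 ≤ ∫ p, ramp (margin hK f p.1 p.2) ∂P + Lγ * ρ :=
    add_nonneg (integral_nonneg fun p => ramp_nonneg' _) (mul_nonneg hL hρ)
  have hne : Q {p | score hK f p.1 p.2 ≤ q} ≠ ⊤ := measure_ne_top _ _
  have hmono := ENNReal.toReal_mono
    (ENNReal.add_ne_top.mpr ⟨hne, ENNReal.ofReal_ne_top⟩) hchain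
  rw [ENNReal.toReal_ofReal (by linarith [hα.2]),
    ENNReal.toReal_add hne ENNReal.ofReal_ne_top, ENNReal.toReal_ofReal hnn] at hmono
  linarith
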